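/- arXiv:2311.15388 — 2 statements merged into one kernel-verified Lean document; each statement's English description precedes it below -/
import Mathlib

section
/- Define t₁(0) = 1, t₁(1) = 0, t₁(n) = F_{n−2} for n ≥ 2, and t₂(0) = 0, t₂(1) = 1, t₂(n) = F_{n−1} for n ≥ 2. Then for all integers n ≥ 1 and m ≥ 1: b(n,m) = t₁(n−m) if m ≤ n < 2m; b(n,m) = t₁(n−m) + t₂(n−2m) if n ≥ 2m; and b(n,m) = 0 if n < m. In particular, b(n,m) = F_{n−m−2} + F_{n−2m−1} for all n ≥ 2m + 2. -/
/-- `l` is a composition of `n`: a finite list of positive integers summing to `n`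
(the empty list is the unique composition of `0`). -/
def IsComposition (n : ℕ) (l : List ℕ) : Prop :=
  (∀ x ∈ l, 0 < x) ∧ l.sum = n

/-- The Arndt condition: `σ_{2i-1} > σ_{2i}` (1-based) for every `i` with `2i ≤ ℓ`;
with 0-based indices, `l[2i] > l[2i+1]` whenever `2i+1 < l.length`. -/
def IsArndt (l : List ℕ) : Prop :=
  ∀ i : ℕ, 2 * i + 1 < l.length → l.getD (2 * i + 1) 0 < l.getD (2 * i) 0

/-- `arndt n` is the number of Arndt compositions of `n`. -/
noncomputable def arndt (n : ℕ) : ℕ :=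
  Set.ncard {l : List ℕ | IsComposition n l ∧ IsArndt l}

/-- `arndtParts n m` is the number of Arndt compositions of `n` with exactly `m` parts. -/
noncomputable def arndtParts (n m : ℕ) : ℕ :=
  Set.ncard {l : List ℕ | IsComposition n l ∧ IsArndt l ∧ l.length = m}

/-- The generalized binomial coefficient `C(a,b) = a(a-1)⋯(a-b+1)/b!` for an integer `a`
and a natural number `b` (represented as a nonnegative integer); it is `0` for negative `b`. -/
def genChoose (a b : ℤ) : ℤ :=
  if 0 ≤ b then (∏ i ∈ Finset.range b.toNat, (a - (i : ℤ))) / (b.toNat.factorial : ℤ) else 0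

/-- `arndtLast n m` is the number of Arndt compositions of `n` whose last part equals `m`
(the last part of the empty composition is taken to be `0`). -/
noncomputable def arndtLast (n m : ℕ) : ℕ :=
  Set.ncard {l : List ℕ | IsComposition n l ∧ IsArndt l ∧ l.getLastD 0 = m}

/-- `t₁(0) = 1`, `t₁(1) = 0`, `t₁(n) = F_{n-2}` for `n ≥ 2`. -/
def t1 : ℕ → ℕ
  | 0 => 1
  | 1 => 0
  | n + 2 => Nat.fib n

/-- `t₂(0) = 0`, `t₂(1) = 1`, `t₂(n) = F_{n-1}` for `n ≥ 2`. -/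
def t2 : ℕ → ℕ
  | 0 => 0
  | 1 => 1
  | n + 2 => Nat.fib (n + 1)

lemma isArndt_nil : IsArndt [] := by intro i h; simp at h
lemma isArndt_single (a : ℕ) : IsArndt [a] := by
  intro i h
  simp only [List.length_singleton] at h; omega
lemma isArndt_cons_cons {a b : ℕ} {r : List ℕ} :
    IsArndt (a :: b :: r) ↔ b < a ∧ IsArndt r := by
  constructor
  · intro h
    refine ⟨by have := h 0 (by simp); simpa using this, ?_⟩
    intro i hi
    have := h (i+1) (by simp; omega)
    simpa [Nat.mul_add, List.getD_cons_succ] using this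
  · rintro ⟨hba, h⟩ i hi
    cases i with
    | zero => simpa using hba
    | succ j =>
      have := h j (by simp at hi ⊢; omega)
      simpa [Nat.mul_add, List.getD_cons_succ] using this

lemma getLastD_indep {r : List ℕ} (h : r ≠ []) (a b : ℕ) : r.getLastD a = r.getLastD b := by
  cases r with
  | nil => simp at h
  | cons x t =>
    simp only [List.getLastD_eq_getLast?, List.getLast?_eq_getLast h, Option.getD_some]

lemma getLastD_cons_of_ne_nil {r : List ℕ} (h : r ≠ []) (a : ℕ) :
    (a :: r).getLastD 0 = r.getLastD 0 := by
  rw [List.getLastD_cons]; exact getLastD_indep h a 0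

/-- index finset for the first two parts: `⟨s, b⟩` encodes first parts `(s - b, b)`. -/
def pIdx (n : ℕ) : Finset ((_ : ℕ) × ℕ) :=
  (Finset.Ico 3 n).sigma (fun s => Finset.Ico 1 ((s+1)/2))

def arn (m : ℕ) : ℕ → Finset (List ℕ) := fun n =>
  ((if n = m then {[m]} else ∅) ∪ (if 2*m < n then {[n-m, m]} else ∅)) ∪
  (pIdx n).attach.biUnion
    (fun p => (arn m (n - p.1.1)).image (fun r => (p.1.1 - p.1.2) :: p.1.2 :: r))
termination_by n => n
decreasing_by
  have := p.2
  simp only [pIdx, Finset.mem_sigma, Finset.mem_Ico] at this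
  omega


lemma mem_ite_singleton {c : Prop} [Decidable c] {x l : List ℕ} :
    l ∈ (if c then ({x} : Finset (List ℕ)) else ∅) ↔ c ∧ l = x := by
  split_ifs with h <;> simp [h]

lemma getLastD_mem {r : List ℕ} (h : r ≠ []) : r.getLastD 0 ∈ r := by
  rw [List.getLastD_eq_getLast?, List.getLast?_eq_getLast h, Option.getD_some]
  exact List.getLast_mem h

lemma mem_arn {m : ℕ} (hm : 1 ≤ m) :
    ∀ n l, l ∈ arn m n ↔ IsComposition n l ∧ IsArndt l ∧ l.getLastD 0 = m := by
  intro n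
  induction n using Nat.strong_induction_on with
  | _ n IH =>
    intro l
    rw [arn]
    simp only [Finset.mem_union, mem_ite_singleton, Finset.mem_biUnion, Finset.mem_attach,
      true_and, Subtype.exists, Finset.mem_image]
    constructor
    · rintro ((⟨rfl, rfl⟩ | ⟨hlt, rfl⟩) | ⟨⟨s, b⟩, hp, r, hr, rfl⟩)
      · exact ⟨⟨by simp; omega, by simp⟩, isArndt_single _, by simp⟩
      · refine ⟨⟨?_, ?_⟩, ?_, by simp⟩
        · intro x hx; simp at hx; rcases hx with rfl | rfl <;> omega
        · simp; omega
        · rw [isArndt_cons_cons]; exact ⟨by omega, isArndt_nil⟩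
      · simp only [pIdx, Finset.mem_sigma, Finset.mem_Ico] at hp
        obtain ⟨⟨hs3, hsn⟩, hb1, hb2⟩ := hp
        obtain ⟨⟨hpos, hsum⟩, harndt, hlast⟩ := (IH (n - s) (by omega) r).mp hr
        dsimp only
        have hrne : r ≠ [] := by rintro rfl; simp at hlast; omega
        refine ⟨⟨?_, ?_⟩, ?_, ?_⟩
        · intro x hx; simp at hx; rcases hx with rfl | rfl | hx
          · omega
          · omega
          · exact hpos x hx
        · simp [hsum]; omega
        · rw [isArndt_cons_cons]; exact ⟨by omega, harndt⟩
        · rw [getLastD_cons_of_ne_nil (by simp), getLastD_cons_of_ne_nil hrne]; exact hlast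
    · rintro ⟨⟨hpos, hsum⟩, harndt, hlast⟩
      rcases l with _ | ⟨x, _ | ⟨y, r⟩⟩
      · simp at hlast; omega
      · simp at hlast hsum
        exact Or.inl (Or.inl ⟨by omega, by rw [hlast]⟩)
      · rcases eq_or_ne r [] with rfl | hrne
        · simp at hlast hsum
          have hyx : y < x := (isArndt_cons_cons.mp harndt).1
          have hy : 1 ≤ y := hpos y (by simp)
          refine Or.inl (Or.inr ⟨by omega, ?_⟩)
          have hx : x = n - m := by omega
          rw [hx, hlast]
        · have hlast' : r.getLastD 0 = m := by
            rw [getLastD_cons_of_ne_nil (by simp), getLastD_cons_of_ne_nil hrne] at hlast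
            exact hlast
          have hyx : y < x := (isArndt_cons_cons.mp harndt).1
          have hy : 1 ≤ y := hpos y (by simp)
          have harndt' : IsArndt r := (isArndt_cons_cons.mp harndt).2
          have hsum' : x + y + r.sum = n := by simp at hsum; omega
          have hmr : m ≤ r.sum := by
            rw [← hlast']
            exact List.single_le_sum (fun a _ => Nat.zero_le a) _ (getLastD_mem hrne)
          refine Or.inr ⟨⟨x + y, y⟩, ?_, r, ?_, ?_⟩
          · simp only [pIdx, Finset.mem_sigma, Finset.mem_Ico]
            refine ⟨⟨by omega, by omega⟩, by omega, by omega⟩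
          · exact (IH (n - (x + y)) (by omega) r).mpr
              ⟨⟨fun a ha => hpos a (by simp [ha]), by omega⟩, harndt', hlast'⟩
          · simp only []
            congr 1
            omega

lemma arn_ne_nil {m : ℕ} (hm : 1 ≤ m) {n : ℕ} {r : List ℕ} (hr : r ∈ arn m n) : r ≠ [] := by
  obtain ⟨_, _, hlast⟩ := (mem_arn hm n r).mp hr
  rintro rfl; simp at hlast; omega

lemma card_arn {m : ℕ} (hm : 1 ≤ m) (n : ℕ) :
    (arn m n).card = (if n = m then 1 else 0) + (if 2 * m < n then 1 else 0)
      + ∑ s ∈ Finset.Ico 3 n, ((s + 1) / 2 - 1) * (arn m (n - s)).card := by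
  conv_lhs => rw [arn]
  have hd12 : Disjoint (if n = m then ({[m]} : Finset (List ℕ)) else ∅)
      (if 2 * m < n then ({[n - m, m]} : Finset (List ℕ)) else ∅) := by
    rw [Finset.disjoint_left]; intro a h1 h2
    rw [mem_ite_singleton] at h1 h2
    obtain ⟨hnm, rfl⟩ := h1
    obtain ⟨hlt, h⟩ := h2
    simp at h
  have hlen : ∀ x ∈ (pIdx n).attach.biUnion
      (fun p => (arn m (n - p.1.1)).image (fun r => (p.1.1 - p.1.2) :: p.1.2 :: r)),
      2 < x.length := by
    intro x hx
    simp only [Finset.mem_biUnion, Finset.mem_attach, true_and, Subtype.exists,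
      Finset.mem_image] at hx
    obtain ⟨p, hp, r, hr, rfl⟩ := hx
    have := arn_ne_nil hm hr
    simp only [List.length_cons]
    cases r with
    | nil => simp at this
    | cons c t => simp
  have hdB : Disjoint ((if n = m then ({[m]} : Finset (List ℕ)) else ∅)
      ∪ (if 2 * m < n then ({[n - m, m]} : Finset (List ℕ)) else ∅))
      ((pIdx n).attach.biUnion
        (fun p => (arn m (n - p.1.1)).image (fun r => (p.1.1 - p.1.2) :: p.1.2 :: r))) := by
    rw [Finset.disjoint_left]
    intro a h1 h2
    have h3 := hlen a h2
    rw [Finset.mem_union, mem_ite_singleton, mem_ite_singleton] at h1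
    rcases h1 with ⟨_, rfl⟩ | ⟨_, rfl⟩ <;> simp at h3
  rw [Finset.card_union_of_disjoint hdB, Finset.card_union_of_disjoint hd12]
  have hcard1 : (if n = m then ({[m]} : Finset (List ℕ)) else ∅).card
      = if n = m then 1 else 0 := by split_ifs <;> simp
  have hcard2 : (if 2 * m < n then ({[n - m, m]} : Finset (List ℕ)) else ∅).card
      = if 2 * m < n then 1 else 0 := by split_ifs <;> simp
  rw [hcard1, hcard2]
  congr 1
  rw [Finset.card_biUnion]
  · rw [Finset.sum_attach (pIdx n)
      (fun p => ((arn m (n - p.1)).image (fun r => (p.1 - p.2) :: p.2 :: r)).card)]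
    have : ∀ p ∈ pIdx n,
        ((arn m (n - p.1)).image (fun r => (p.1 - p.2) :: p.2 :: r)).card
          = (arn m (n - p.1)).card := by
      intro p _
      apply Finset.card_image_of_injective
      intro r1 r2 h
      simpa using h
    rw [Finset.sum_congr rfl this]
    rw [pIdx, Finset.sum_sigma]
    apply Finset.sum_congr rfl
    intro s _
    dsimp only
    rw [Finset.sum_const, Nat.card_Ico, smul_eq_mul]
  · intro p _ q _ hpq
    rw [Function.onFun, Finset.disjoint_left]
    intro a h1 h2
    simp only [Finset.mem_image] at h1 h2
    obtain ⟨r1, hr1, he1⟩ := h1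
    obtain ⟨r2, hr2, he2⟩ := h2
    apply hpq
    have hp := p.2
    have hq := q.2
    simp only [pIdx, Finset.mem_sigma, Finset.mem_Ico] at hp hq
    rw [← he2] at he1
    simp only [List.cons.injEq] at he1
    obtain ⟨h1', h2', h3'⟩ := he1
    have : p.1.1 = q.1.1 := by omega
    apply Subtype.ext
    obtain ⟨⟨s1, b1⟩, _⟩ := p
    obtain ⟨⟨s2, b2⟩, _⟩ := q
    simp only at this h2' ⊢
    subst this; subst h2'; rfl



def qq (s : ℕ) : ℕ := (s + 1) / 2 - 1

def Ssum (u : ℕ → ℕ) (K : ℕ) : ℕ := ∑ j ∈ Finset.range (K - 2), qq (K - j) * u j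

lemma Ssum_step (u : ℕ → ℕ) (K : ℕ) :
    Ssum u (K + 2) = Ssum u K + ∑ j ∈ Finset.range K, u j := by
  unfold Ssum
  rw [show K + 2 - 2 = K from rfl]
  have h1 : ∀ j ∈ Finset.range K, qq (K + 2 - j) * u j = qq (K - j) * u j + u j := by
    intro j hj
    simp only [Finset.mem_range] at hj
    have h2 : K + 2 - j = (K - j) + 2 := by omega
    have h3 : qq ((K - j) + 2) = qq (K - j) + 1 := by simp only [qq]; omega
    rw [h2, h3, add_mul, one_mul]
  rw [Finset.sum_congr rfl h1, Finset.sum_add_distrib]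
  congr 1
  symm
  apply Finset.sum_subset
  · exact Finset.range_subset_range.mpr (by omega)
  · intro j hj hnj
    simp only [Finset.mem_range] at hj hnj
    have : qq (K - j) = 0 := by simp only [qq]; omega
    rw [this, zero_mul]

lemma sum_Ico_eq_Ssum (u : ℕ → ℕ) (K : ℕ) :
    ∑ s ∈ Finset.Ico 3 (K + 1), qq s * u (K - s) = Ssum u K := by
  unfold Ssum
  apply Finset.sum_bij' (i := fun s _ => K - s) (j := fun j _ => K - j)
  · intro s hs
    simp only [Finset.mem_Ico] at hs
    simp only [Finset.mem_range]; omega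
  · intro j hj
    simp only [Finset.mem_range] at hj
    simp only [Finset.mem_Ico]; omega
  · intro s hs
    simp only [Finset.mem_Ico] at hs; omega
  · intro j hj
    simp only [Finset.mem_range] at hj; omega
  · intro s hs
    simp only [Finset.mem_Ico] at hs
    congr 2
    omega

lemma T1_eq (L : ℕ) : ∑ j ∈ Finset.range (L + 2), t1 j = Nat.fib (L + 1) := by
  induction L with
  | zero => decide
  | succ L IH =>
    rw [Finset.sum_range_succ, IH, show t1 (L + 2) = Nat.fib L from rfl, Nat.fib_add_two,
      Nat.add_comm]

lemma T2_eq (L : ℕ) : ∑ j ∈ Finset.range (L + 2), t2 j = Nat.fib (L + 2) := by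
  induction L with
  | zero => decide
  | succ L IH =>
    rw [Finset.sum_range_succ, IH, show t2 (L + 2) = Nat.fib (L + 1) from rfl]
    rw [show L + 1 + 2 = (L + 1) + 2 from rfl, Nat.fib_add_two, Nat.fib_add_two]
    have h : Nat.fib (L + 1 + 1) = Nat.fib (L + 2) := rfl
    have h2 : Nat.fib (L + 2) = Nat.fib L + Nat.fib (L + 1) := Nat.fib_add_two
    omega

lemma claimA : ∀ K, 1 ≤ K → t1 K = Ssum t1 K := by
  intro K
  induction K using Nat.strong_induction_on with
  | _ K IH =>
    intro hK
    match K, hK with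
    | 1, _ => decide
    | 2, _ => decide
    | 3, _ => decide
    | 4, _ => decide
    | (L + 5), _ =>
      rw [show L + 5 = (L + 3) + 2 from rfl, Ssum_step, ← IH (L + 3) (by omega) (by omega),
        show L + 3 = L + 1 + 2 from rfl, T1_eq]
      show Nat.fib (L + 3) = Nat.fib (L + 1) + Nat.fib (L + 2)
      rw [Nat.fib_add_two]

lemma claimB : ∀ K, 1 ≤ K → t2 K = 1 + Ssum t2 K := by
  intro K
  induction K using Nat.strong_induction_on with
  | _ K IH =>
    intro hK
    match K, hK with
    | 1, _ => decide
    | 2, _ => decide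
    | 3, _ => decide
    | 4, _ => decide
    | (L + 5), _ =>
      rw [show L + 5 = (L + 3) + 2 from rfl, Ssum_step, show L + 3 = L + 1 + 2 from rfl, T2_eq,
        ← Nat.add_assoc, ← IH (L + 3) (by omega) (by omega)]
      show Nat.fib (L + 4) = Nat.fib (L + 2) + Nat.fib (L + 3)
      rw [Nat.fib_add_two]

def G (m n : ℕ) : ℕ :=
  (if m ≤ n then t1 (n - m) else 0) + (if 2 * m ≤ n then t2 (n - 2 * m) else 0)

lemma arn_card {m : ℕ} (hm : 1 ≤ m) : ∀ n, (arn m n).card = G m n := by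
  intro n
  induction n using Nat.strong_induction_on with
  | _ n IH =>
    rw [card_arn hm]
    have hIH : ∀ s ∈ Finset.Ico 3 n, ((s + 1) / 2 - 1) * (arn m (n - s)).card
        = qq s * G m (n - s) := by
      intro s hs
      simp only [Finset.mem_Ico] at hs
      rw [IH (n - s) (by omega)]; rfl
    rw [Finset.sum_congr rfl hIH]
    have hsplit : ∀ s ∈ Finset.Ico 3 n, qq s * G m (n - s)
        = qq s * (if m ≤ n - s then t1 (n - s - m) else 0)
          + qq s * (if 2 * m ≤ n - s then t2 (n - s - 2 * m) else 0) := by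
      intro s _; rw [G, Nat.mul_add]
    rw [Finset.sum_congr rfl hsplit, Finset.sum_add_distrib]
    have hsub1 : Finset.Ico 3 ((n - m) + 1) ⊆ Finset.Ico 3 n := by
      intro s hs
      simp only [Finset.mem_Ico] at hs ⊢
      omega
    have hv1 : ∀ s ∈ Finset.Ico 3 n, s ∉ Finset.Ico 3 ((n - m) + 1) →
        qq s * (if m ≤ n - s then t1 (n - s - m) else 0) = 0 := by
      intro s hs hns
      simp only [Finset.mem_Ico] at hs hns
      rw [if_neg (by omega), Nat.mul_zero]
    have e1 : (∑ s ∈ Finset.Ico 3 n, qq s * (if m ≤ n - s then t1 (n - s - m) else 0))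
        = ∑ s ∈ Finset.Ico 3 ((n - m) + 1), qq s * t1 ((n - m) - s) := by
      rw [← Finset.sum_subset hsub1 hv1]
      apply Finset.sum_congr rfl
      intro s hs
      simp only [Finset.mem_Ico] at hs
      rw [if_pos (by omega), show n - s - m = n - m - s from by omega]
    have hsub2 : Finset.Ico 3 ((n - 2 * m) + 1) ⊆ Finset.Ico 3 n := by
      intro s hs
      simp only [Finset.mem_Ico] at hs ⊢
      omega
    have hv2 : ∀ s ∈ Finset.Ico 3 n, s ∉ Finset.Ico 3 ((n - 2 * m) + 1) →
        qq s * (if 2 * m ≤ n - s then t2 (n - s - 2 * m) else 0) = 0 := by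
      intro s hs hns
      simp only [Finset.mem_Ico] at hs hns
      rw [if_neg (by omega), Nat.mul_zero]
    have e2 : (∑ s ∈ Finset.Ico 3 n, qq s * (if 2 * m ≤ n - s then t2 (n - s - 2 * m) else 0))
        = ∑ s ∈ Finset.Ico 3 ((n - 2 * m) + 1), qq s * t2 ((n - 2 * m) - s) := by
      rw [← Finset.sum_subset hsub2 hv2]
      apply Finset.sum_congr rfl
      intro s hs
      simp only [Finset.mem_Ico] at hs
      rw [if_pos (by omega), show n - s - 2 * m = n - 2 * m - s from by omega]
    rw [e1, e2, sum_Ico_eq_Ssum, sum_Ico_eq_Ssum, G]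
    have hz1 : Ssum t1 0 = 0 := rfl
    have hz2 : Ssum t2 0 = 0 := rfl
    rcases Nat.lt_or_ge n m with h1 | h1
    · rw [if_neg (show ¬ n = m by omega), if_neg (show ¬ 2 * m < n by omega),
        if_neg (show ¬ m ≤ n by omega), if_neg (show ¬ 2 * m ≤ n by omega),
        show n - m = 0 by omega, show n - 2 * m = 0 by omega, hz1, hz2]
    · rcases Nat.eq_or_lt_of_le h1 with h2 | h2
      · rw [if_pos (show n = m by omega), if_neg (show ¬ 2 * m < n by omega),
          if_pos (show m ≤ n by omega), if_neg (show ¬ 2 * m ≤ n by omega),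
          show n - m = 0 by omega, show n - 2 * m = 0 by omega, hz1, hz2]
        decide
      · have hK : 1 ≤ n - m := by omega
        rw [← claimA _ hK]
        rcases Nat.lt_or_ge n (2 * m) with h3 | h3
        · rw [if_neg (show ¬ n = m by omega), if_neg (show ¬ 2 * m < n by omega),
            if_pos (show m ≤ n by omega), if_neg (show ¬ 2 * m ≤ n by omega),
            show n - 2 * m = 0 by omega, hz2]
          omega
        · rcases Nat.eq_or_lt_of_le h3 with h4 | h4
          · rw [if_neg (show ¬ n = m by omega), if_neg (show ¬ 2 * m < n by omega),
              if_pos (show m ≤ n by omega), if_pos (show 2 * m ≤ n by omega),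
              show n - 2 * m = 0 by omega, hz2]
            have ht : t2 0 = 0 := rfl
            omega
          · rw [if_neg (show ¬ n = m by omega), if_pos (show 2 * m < n by omega),
              if_pos (show m ≤ n by omega), if_pos (show 2 * m ≤ n by omega)]
            have hK2 : 1 ≤ n - 2 * m := by omega
            have hB := claimB _ hK2
            omega


lemma arndtLast_eq_G {m : ℕ} (hm : 1 ≤ m) (n : ℕ) : arndtLast n m = G m n := by
  have hset : {l : List ℕ | IsComposition n l ∧ IsArndt l ∧ l.getLastD 0 = m}
      = ↑(arn m n) := by
    ext l
    simp only [Set.mem_setOf_eq, Finset.mem_coe]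
    exact (mem_arn hm n l).symm
  rw [arndtLast, hset, Set.ncard_coe_finset, arn_card hm]


/-- for `n, m ≥ 1`: `b(n,m) = t₁(n-m)` if `m ≤ n < 2m`;
`b(n,m) = t₁(n-m) + t₂(n-2m)` if `n ≥ 2m`; and `b(n,m) = 0` if `n < m`.
In particular `b(n,m) = F_{n-m-2} + F_{n-2m-1}` for all `n ≥ 2m+2`. -/
theorem arndtLast_formula :
    (∀ n m : ℕ, 1 ≤ n → 1 ≤ m →
      (m ≤ n → n < 2 * m → arndtLast n m = t1 (n - m)) ∧
      (2 * m ≤ n → arndtLast n m = t1 (n - m) + t2 (n - 2 * m)) ∧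
      (n < m → arndtLast n m = 0)) ∧
    (∀ n m : ℕ, 1 ≤ m → 2 * m + 2 ≤ n →
      arndtLast n m = Nat.fib (n - m - 2) + Nat.fib (n - 2 * m - 1)) := by
  have main : ∀ n m : ℕ, 1 ≤ m →
      (m ≤ n → n < 2 * m → arndtLast n m = t1 (n - m)) ∧
      (2 * m ≤ n → arndtLast n m = t1 (n - m) + t2 (n - 2 * m)) ∧
      (n < m → arndtLast n m = 0) := by
    intro n m hm
    rw [arndtLast_eq_G hm, G]
    refine ⟨?_, ?_, ?_⟩
    · intro h1 h2
      rw [if_pos h1, if_neg (by omega), Nat.add_zero]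
    · intro h1
      rw [if_pos (by omega), if_pos h1]
    · intro h1
      rw [if_neg (by omega), if_neg (by omega)]
  refine ⟨fun n m _ hm => main n m hm, ?_⟩
  intro n m hm hn
  have h := (main n m hm).2.1 (by omega)
  rw [h, show n - m = (n - m - 2) + 2 from by omega,
    show n - 2 * m = (n - 2 * m - 2) + 2 from by omega]
  rw [show t1 ((n - m - 2) + 2) = Nat.fib (n - m - 2) from rfl,
    show t2 ((n - 2 * m - 2) + 2) = Nat.fib ((n - 2 * m - 2) + 1) from rfl,
    show (n - 2 * m - 2) + 1 = n - 2 * m - 1 from by omega]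
  rw [show (n - m - 2) + 2 - 2 = n - m - 2 from by omega,
    show (n - 2 * m - 2) + 2 - 1 = n - 2 * m - 1 from by omega]
end

section
/- Fix an integer k ≥ 0. The bivariate formal power series A_k(x,y) = Σ_{n,m ≥ 0} a_k(n,m) xⁿ yᵐ over ℤ satisfies (1 - x - x² + x³ - x^{3+k} y²) · A_k(x,y) = (1 - x²)(1 - x + xy). In particular, setting y = 1, the series Σ_{n≥0} a_k(n) xⁿ satisfies (1 - x - x² + x³ - x^{k+3}) · Σ_{n≥0} a_k(n) xⁿ = 1 - x². -/
/-- The `k`-Arndt condition: `σ_{2i-1} > σ_{2i} + k` (1-based) for every `i` with `2i ≤ ℓ`. -/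
def IsKArndt (k : ℕ) (l : List ℕ) : Prop :=
  ∀ i : ℕ, 2 * i + 1 < l.length → l.getD (2 * i + 1) 0 + k < l.getD (2 * i) 0

/-- `kArndtParts k n m` is the number of `k`-Arndt compositions of `n` with exactly
`m` parts. -/
noncomputable def kArndtParts (k n m : ℕ) : ℕ :=
  Set.ncard {l : List ℕ | IsComposition n l ∧ IsKArndt k l ∧ l.length = m}

/-- `kArndt k n` is the number of `k`-Arndt compositions of `n`. -/
noncomputable def kArndt (k n : ℕ) : ℕ :=
  Set.ncard {l : List ℕ | IsComposition n l ∧ IsKArndt k l}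

/-- The bivariate generating function `A_k(x,y) = Σ_{n,m≥0} a_k(n,m) xⁿ yᵐ`,
with `x = X 0` and `y = X 1`. -/
noncomputable def kArndtGF (k : ℕ) : MvPowerSeries (Fin 2) ℤ :=
  fun d => (kArndtParts k (d 0) (d 1) : ℤ)


def pairsAux (k n : ℕ) : Finset (ℕ × ℕ) :=
  (Finset.range (n+1) ×ˢ Finset.range (n+1)).filter
    fun ab => 0 < ab.2 ∧ ab.2 + k < ab.1 ∧ ab.1 + ab.2 ≤ n

lemma mem_pairsAux {k n : ℕ} {ab : ℕ × ℕ} :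
    ab ∈ pairsAux k n ↔ 0 < ab.2 ∧ ab.2 + k < ab.1 ∧ ab.1 + ab.2 ≤ n := by
  simp [pairsAux, Finset.mem_filter, Finset.mem_product]
  omega

def compF (k : ℕ) : ℕ → ℕ → Finset (List ℕ)
  | n, 0 => if n = 0 then {([] : List ℕ)} else ∅
  | n, 1 => if 0 < n then {[n]} else ∅
  | n, (m+2) => (pairsAux k n).biUnion fun ab =>
      (compF k (n - ab.1 - ab.2) m).image fun t => ab.1 :: ab.2 :: t

lemma isKArndt_cons_cons {k a b : ℕ} {t : List ℕ} :
    IsKArndt k (a :: b :: t) ↔ b + k < a ∧ IsKArndt k t := by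
  constructor
  · intro h
    refine ⟨by simpa using h 0 (by simp), fun i hi => ?_⟩
    have := h (i+1) (by simp; omega)
    simpa [List.getD_cons_succ, Nat.mul_add] using this
  · rintro ⟨h1, h2⟩ i hi
    match i with
    | 0 => simpa using h1
    | (j+1) =>
      have := h2 j (by simp at hi; omega)
      simpa [List.getD_cons_succ, Nat.mul_add] using this

lemma mem_compF {k : ℕ} : ∀ {m n : ℕ} {l : List ℕ},
    l ∈ compF k n m ↔ IsComposition n l ∧ IsKArndt k l ∧ l.length = m := by
  intro m
  induction m using Nat.strong_induction_on with
  | _ m ih =>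
    match m with
    | 0 =>
      intro n l
      simp only [compF]
      constructor
      · intro h
        split at h
        · simp at h; subst h
          refine ⟨⟨by simp, by simp; omega⟩, fun i hi => by simp at hi, rfl⟩
        · simp at h
      · rintro ⟨⟨_, hsum⟩, _, hlen⟩
        have : l = [] := List.length_eq_zero_iff.mp hlen
        subst this
        simp at hsum
        simp [hsum]
    | 1 =>
      intro n l
      simp only [compF]
      constructor
      · intro h
        split at h
        · simp at h; subst h
          refine ⟨⟨by simp; omega, by simp⟩, fun i hi => by simp at hi, rfl⟩
        · simp at h
      · rintro ⟨⟨hpos, hsum⟩, _, hlen⟩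
        match l with
        | [a] =>
          simp at hsum
          subst hsum
          have : 0 < a := hpos a (by simp)
          simp [this]
    | (m+2) =>
      intro n l
      simp only [compF, Finset.mem_biUnion, Finset.mem_image]
      constructor
      · rintro ⟨⟨a, b⟩, hab, t, ht, rfl⟩
        rw [mem_pairsAux] at hab
        obtain ⟨hb, hak, habn⟩ := hab
        rw [ih m (by omega)] at ht
        obtain ⟨⟨hpos, hsum⟩, harndt, hlen⟩ := ht
        refine ⟨⟨?_, ?_⟩, ?_, ?_⟩
        · intro x hx
          simp at hx
          rcases hx with rfl | rfl | hx
          · omega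
          · omega
          · exact hpos x hx
        · simp only [List.sum_cons]; omega
        · exact isKArndt_cons_cons.mpr ⟨hak, harndt⟩
        · simp [hlen]
      · rintro ⟨⟨hpos, hsum⟩, harndt, hlen⟩
        match l with
        | (a :: b :: t) =>
          obtain ⟨hak, harndt'⟩ := isKArndt_cons_cons.mp harndt
          simp at hsum hlen
          refine ⟨(a, b), mem_pairsAux.mpr ⟨hpos b (by simp), hak, by omega⟩, t, ?_, rfl⟩
          rw [ih m (by omega)]
          exact ⟨⟨fun x hx => hpos x (by simp [hx]), by omega⟩, harndt', hlen⟩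

lemma kArndtParts_eq_card (k n m : ℕ) : kArndtParts k n m = (compF k n m).card := by
  have : {l : List ℕ | IsComposition n l ∧ IsKArndt k l ∧ l.length = m}
      = ↑(compF k n m) := by
    ext l
    simp [mem_compF]
  rw [kArndtParts, this, Set.ncard_coe_finset]

lemma compF_card_conv (k n m : ℕ) :
    (compF k n (m+2)).card = ∑ ab ∈ pairsAux k n, (compF k (n - ab.1 - ab.2) m).card := by
  rw [compF, Finset.card_biUnion]
  · refine Finset.sum_congr rfl fun ab _ => ?_
    exact Finset.card_image_of_injective _ (fun t1 t2 h => by simpa using h)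
  · rintro ⟨a, b⟩ _ ⟨a', b'⟩ _ hne
    simp only [Finset.disjoint_left, Finset.mem_image]
    rintro l ⟨t, _, rfl⟩ ⟨t', _, h⟩
    simp at h
    exact hne (by simp [h.1, h.2.1])

def pcount (k s : ℕ) : ℕ := (s - (k+1)) / 2

lemma pairsAux_fiber_card {k n s : ℕ} (hs : s ≤ n) :
    ((pairsAux k n).filter (fun ab => ab.1 + ab.2 = s)).card = pcount k s := by
  have himg : (pairsAux k n).filter (fun ab => ab.1 + ab.2 = s)
      = (Finset.Icc 1 (pcount k s)).image (fun b => (s - b, b)) := by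
    ext ⟨a, b⟩
    simp only [Finset.mem_filter, mem_pairsAux, Finset.mem_image, Finset.mem_Icc, pcount]
    constructor
    · rintro ⟨⟨hb, hak, habn⟩, hab⟩
      exact ⟨b, ⟨hb, by omega⟩, by simp; omega⟩
    · rintro ⟨b', ⟨hb1, hb2⟩, h⟩
      simp at h
      obtain ⟨rfl, rfl⟩ := h
      refine ⟨⟨hb1, by omega, by omega⟩, by omega⟩
  rw [himg, Finset.card_image_of_injective _ (fun b1 b2 h => by simpa using congrArg Prod.snd h),
    Nat.card_Icc]
  simp

lemma compF_card_conv' (k n m : ℕ) :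
    (compF k n (m+2)).card
      = ∑ s ∈ Finset.range (n+1), pcount k s * (compF k (n - s) m).card := by
  rw [compF_card_conv]
  rw [← Finset.sum_fiberwise_of_maps_to (g := fun ab : ℕ × ℕ => ab.1 + ab.2)
    (t := Finset.range (n+1)) (fun ab hab => by
      rw [mem_pairsAux] at hab; simp; omega)]
  refine Finset.sum_congr rfl fun s hs => ?_
  simp only [Finset.mem_range] at hs
  rw [Finset.sum_congr rfl (fun ab hab => by
      simp only [Finset.mem_filter] at hab
      rw [show n - ab.1 - ab.2 = n - s by omega]),
    Finset.sum_const, pairsAux_fiber_card (by omega)]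
  simp [mul_comm]

lemma shift_sum (g p : ℕ → ℤ) (j n : ℕ) :
    (if j ≤ n then ∑ s ∈ Finset.range (n-j+1), p s * g (n-j-s) else 0)
      = ∑ s ∈ Finset.range (n+1), (if j ≤ s then p (s-j) else 0) * g (n-s) := by
  by_cases h : j ≤ n
  · rw [if_pos h]
    conv_rhs => rw [show n+1 = j + (n-j+1) by omega, Finset.sum_range_add]
    have h1 : ∀ s ∈ Finset.range j, (if j ≤ s then p (s-j) else 0) * g (n-s) = 0 := by
      intro s hs
      simp only [Finset.mem_range] at hs
      rw [if_neg (by omega), zero_mul]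
    rw [Finset.sum_congr rfl h1, Finset.sum_const, smul_zero, zero_add]
    refine Finset.sum_congr rfl fun s _ => ?_
    rw [if_pos (by omega), show j + s - j = s by omega, show n - (j+s) = n - j - s by omega]
  · rw [if_neg h]
    symm
    refine Finset.sum_eq_zero fun s hs => ?_
    simp only [Finset.mem_range] at hs
    rw [if_neg (by omega), zero_mul]

lemma kArndtParts_zero (k n : ℕ) : kArndtParts k n 0 = if n = 0 then 1 else 0 := by
  rw [kArndtParts_eq_card]
  simp only [compF]
  split <;> simp

lemma kArndtParts_one (k n : ℕ) : kArndtParts k n 1 = if 0 < n then 1 else 0 := by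
  rw [kArndtParts_eq_card]
  simp only [compF]
  split <;> simp

lemma qident (k s : ℕ) :
    (pcount k s : ℤ) - (if 1 ≤ s then (pcount k (s-1) : ℤ) else 0)
      - (if 2 ≤ s then (pcount k (s-2) : ℤ) else 0)
      + (if 3 ≤ s then (pcount k (s-3) : ℤ) else 0)
    = if s = k + 3 then 1 else 0 := by
  simp only [pcount]
  split_ifs <;> omega

set_option maxHeartbeats 1000000 in
lemma master (k n m : ℕ) :
    (kArndtParts k n m : ℤ)
      - (if 1 ≤ n then (kArndtParts k (n-1) m : ℤ) else 0)
      - (if 2 ≤ n then (kArndtParts k (n-2) m : ℤ) else 0)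
      + (if 3 ≤ n then (kArndtParts k (n-3) m : ℤ) else 0)
      - (if 3 + k ≤ n ∧ 2 ≤ m then (kArndtParts k (n-(3+k)) (m-2) : ℤ) else 0)
    = (if n = 0 ∧ m = 0 then 1 else 0) - (if n = 1 ∧ m = 0 then 1 else 0)
      + (if n = 1 ∧ m = 1 then 1 else 0) - (if n = 2 ∧ m = 0 then 1 else 0)
      + (if n = 3 ∧ m = 0 then 1 else 0) - (if n = 3 ∧ m = 1 then 1 else 0) := by
  match m with
  | 0 =>
    simp only [kArndtParts_zero]
    norm_num
    split_ifs <;> omega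
  | 1 =>
    simp only [kArndtParts_one]
    norm_num
    split_ifs <;> omega
  | (m+2) =>
    have conv : ∀ n', (kArndtParts k n' (m+2) : ℤ)
        = ∑ s ∈ Finset.range (n'+1),
            (fun s => (pcount k s : ℤ)) s * (fun j => (kArndtParts k j m : ℤ)) (n'-s) := by
      intro n'
      rw [kArndtParts_eq_card, compF_card_conv']
      push_cast
      refine Finset.sum_congr rfl fun s _ => ?_
      rw [kArndtParts_eq_card]
    simp only [conv]
    rw [shift_sum (fun j => (kArndtParts k j m : ℤ)) (fun s => (pcount k s : ℤ)) 1 n,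
      shift_sum (fun j => (kArndtParts k j m : ℤ)) (fun s => (pcount k s : ℤ)) 2 n,
      shift_sum (fun j => (kArndtParts k j m : ℤ)) (fun s => (pcount k s : ℤ)) 3 n]
    rw [← Finset.sum_sub_distrib, ← Finset.sum_sub_distrib, ← Finset.sum_add_distrib]
    have step : ∀ s ∈ Finset.range (n+1),
        ((fun s => (pcount k s : ℤ)) s * (fun j => (kArndtParts k j m : ℤ)) (n-s)
          - (if 1 ≤ s then (pcount k (s-1) : ℤ) else 0) * (fun j => (kArndtParts k j m : ℤ)) (n-s)
          - (if 2 ≤ s then (pcount k (s-2) : ℤ) else 0) * (fun j => (kArndtParts k j m : ℤ)) (n-s)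
          + (if 3 ≤ s then (pcount k (s-3) : ℤ) else 0) * (fun j => (kArndtParts k j m : ℤ)) (n-s))
        = (if s = k + 3 then (kArndtParts k (n-s) m : ℤ) else 0) := by
      intro s _
      rw [← sub_mul, ← sub_mul, ← add_mul, qident]
      simp only [ite_mul, one_mul, zero_mul]
    rw [Finset.sum_congr rfl step, Finset.sum_ite_eq' (Finset.range (n+1)) (k+3)]
    have h2 : 2 ≤ m + 2 := by omega
    simp only [Finset.mem_range, h2, and_true, show m + 2 - 2 = m from rfl,
      show 3 + k = k + 3 by omega, Nat.lt_add_one_iff]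
    rw [sub_self, if_neg (by omega : ¬(n = 0 ∧ m + 2 = 0)), if_neg (by omega : ¬(n = 1 ∧ m + 2 = 0)),
      if_neg (by omega : ¬(n = 1 ∧ m + 2 = 1)), if_neg (by omega : ¬(n = 2 ∧ m + 2 = 0)),
      if_neg (by omega : ¬(n = 3 ∧ m + 2 = 0)), if_neg (by omega : ¬(n = 3 ∧ m + 2 = 1))]
    ring

lemma kArndtParts_vanish {k n m : ℕ} (h : n < m) : kArndtParts k n m = 0 := by
  have he : {l : List ℕ | IsComposition n l ∧ IsKArndt k l ∧ l.length = m} = ∅ := by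
    ext l
    simp only [Set.mem_setOf_eq, Set.mem_empty_iff_false, iff_false]
    rintro ⟨⟨hpos, hsum⟩, _, hlen⟩
    have := List.length_le_sum_of_one_le l hpos
    omega
  rw [kArndtParts, he, Set.ncard_empty]

lemma kArndt_eq_sum (k n N : ℕ) (hN : n < N) :
    kArndt k n = ∑ m ∈ Finset.range N, kArndtParts k n m := by
  have hset : {l : List ℕ | IsComposition n l ∧ IsKArndt k l}
      = ↑((Finset.range N).biUnion (fun m => compF k n m)) := by
    ext l
    simp only [Set.mem_setOf_eq, Finset.coe_biUnion, Set.mem_iUnion, Finset.mem_coe,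
      Finset.mem_biUnion, Finset.mem_range, mem_compF]
    constructor
    · rintro ⟨hc, ha⟩
      refine ⟨l.length, ?_, hc, ha, rfl⟩
      have := List.length_le_sum_of_one_le l hc.1
      have := hc.2
      omega
    · rintro ⟨m, _, hc, ha, _⟩
      exact ⟨hc, ha⟩
  rw [kArndt, hset, Set.ncard_coe_finset, Finset.card_biUnion]
  · exact Finset.sum_congr rfl fun m _ => (kArndtParts_eq_card k n m).symm
  · intro a _ b _ hab
    simp only [Finset.disjoint_left]
    intro l hla hlb
    rw [mem_compF] at hla hlb
    exact hab (hla.2.2 ▸ hlb.2.2)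

open MvPowerSeries Finsupp in
lemma coeff_shift (a b : ℕ) (f : MvPowerSeries (Fin 2) ℤ) (d : Fin 2 →₀ ℕ) :
    MvPowerSeries.coeff d ((X 0)^a * (X 1)^b * f)
      = if a ≤ d 0 ∧ b ≤ d 1
          then MvPowerSeries.coeff (d - (single 0 a + single 1 b)) f else 0 := by
  rw [X_pow_eq, X_pow_eq, monomial_mul_monomial, one_mul, coeff_monomial_mul]
  have hc : (single (0 : Fin 2) a + single 1 b ≤ d) ↔ (a ≤ d 0 ∧ b ≤ d 1) := by
    rw [Finsupp.le_def]
    rw [Fin.forall_fin_two]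
    simp [Finsupp.single_apply]
  simp only [hc, one_mul]

open MvPowerSeries Finsupp in
lemma coeff_mono (a b : ℕ) (d : Fin 2 →₀ ℕ) :
    MvPowerSeries.coeff d ((X 0)^a * (X 1)^b : MvPowerSeries (Fin 2) ℤ)
      = if d 0 = a ∧ d 1 = b then 1 else 0 := by
  rw [X_pow_eq, X_pow_eq, monomial_mul_monomial, one_mul, coeff_monomial]
  have hc : (d = single (0 : Fin 2) a + single 1 b) ↔ (d 0 = a ∧ d 1 = b) := by
    rw [Finsupp.ext_iff, Fin.forall_fin_two]
    simp [Finsupp.single_apply]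
  simp only [hc]

open MvPowerSeries Finsupp in
lemma part1 (k : ℕ) :
    (1 - MvPowerSeries.X 0 - MvPowerSeries.X 0 ^ 2 + MvPowerSeries.X 0 ^ 3
          - MvPowerSeries.X 0 ^ (3 + k) * MvPowerSeries.X 1 ^ 2) * kArndtGF k
        = (1 - MvPowerSeries.X 0 ^ 2) *
          (1 - MvPowerSeries.X 0 + MvPowerSeries.X 0 * MvPowerSeries.X 1) := by
  have hA : ∀ e : Fin 2 →₀ ℕ, (MvPowerSeries.coeff e) (kArndtGF k)
      = (kArndtParts k (e 0) (e 1) : ℤ) := fun e => rfl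
  apply MvPowerSeries.ext
  intro d
  have expand : (1 - MvPowerSeries.X 0 - MvPowerSeries.X 0 ^ 2 + MvPowerSeries.X 0 ^ 3
          - MvPowerSeries.X 0 ^ (3 + k) * MvPowerSeries.X 1 ^ 2) * kArndtGF k
      = (X 0)^0 * (X 1)^0 * kArndtGF k - (X 0)^1 * (X 1)^0 * kArndtGF k
        - (X 0)^2 * (X 1)^0 * kArndtGF k + (X 0)^3 * (X 1)^0 * kArndtGF k
        - (X 0)^(3+k) * (X 1)^2 * kArndtGF k := by ring
  have expandR : (1 - MvPowerSeries.X 0 ^ 2) *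
          (1 - MvPowerSeries.X 0 + MvPowerSeries.X 0 * MvPowerSeries.X 1)
      = ((X 0)^0 * (X 1)^0 : MvPowerSeries (Fin 2) ℤ) - (X 0)^1 * (X 1)^0 + (X 0)^1 * (X 1)^1
        - (X 0)^2 * (X 1)^0 + (X 0)^3 * (X 1)^0 - (X 0)^3 * (X 1)^1 := by ring
  rw [expand, expandR]
  simp only [map_sub, map_add, coeff_shift, coeff_mono, hA, Finsupp.tsub_apply,
    Finsupp.add_apply, Finsupp.single_apply, Nat.zero_le, and_true, true_and, le_refl,
    if_true, Fin.isValue]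
  norm_num
  exact master k (d 0) (d 1)

lemma sum_ite_const (c : Prop) [Decidable c] (f : ℕ → ℤ) (s : Finset ℕ) :
    ∑ m ∈ s, (if c then f m else 0) = if c then ∑ m ∈ s, f m else 0 := by
  split_ifs <;> simp



lemma part2 (k : ℕ) :
    (1 - PowerSeries.X - PowerSeries.X ^ 2 + PowerSeries.X ^ 3 - PowerSeries.X ^ (k + 3)) *
        PowerSeries.mk (fun n => (kArndt k n : ℤ)) = 1 - PowerSeries.X ^ 2 := by
  have hZ : ∀ c N : ℕ, c < N →
      ∑ m ∈ Finset.range N, (kArndtParts k c m : ℤ) = (kArndt k c : ℤ) := by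
    intro c N h
    rw [kArndt_eq_sum k c N h]
    push_cast
    rfl
  apply PowerSeries.ext
  intro n
  set f := PowerSeries.mk (fun n => (kArndt k n : ℤ)) with hf
  have expand : (1 - PowerSeries.X - PowerSeries.X ^ 2 + PowerSeries.X ^ 3
        - PowerSeries.X ^ (k + 3)) * f
      = PowerSeries.X ^ 0 * f - PowerSeries.X ^ 1 * f - PowerSeries.X ^ 2 * f
        + PowerSeries.X ^ 3 * f - PowerSeries.X ^ (k+3) * f := by ring
  rw [expand]
  simp only [map_sub, map_add, PowerSeries.coeff_X_pow_mul', PowerSeries.coeff_mk,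
    PowerSeries.coeff_one, PowerSeries.coeff_X_pow, hf, Nat.zero_le, if_true, Nat.sub_zero]
  have key : ∑ m ∈ Finset.range (n+3),
      ((kArndtParts k n m : ℤ)
        - (if 1 ≤ n then (kArndtParts k (n-1) m : ℤ) else 0)
        - (if 2 ≤ n then (kArndtParts k (n-2) m : ℤ) else 0)
        + (if 3 ≤ n then (kArndtParts k (n-3) m : ℤ) else 0)
        - (if 3 + k ≤ n ∧ 2 ≤ m then (kArndtParts k (n-(3+k)) (m-2) : ℤ) else 0))
      = ∑ m ∈ Finset.range (n+3),
      ((if n = 0 ∧ m = 0 then 1 else 0) - (if n = 1 ∧ m = 0 then 1 else 0)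
        + (if n = 1 ∧ m = 1 then 1 else 0) - (if n = 2 ∧ m = 0 then 1 else 0)
        + (if n = 3 ∧ m = 0 then 1 else 0) - (if n = 3 ∧ m = 1 then (1:ℤ) else 0)) :=
    Finset.sum_congr rfl fun m _ => master k n m
  have e1 : ∀ (i j : ℕ) (c : ℤ), j < n + 3 →
      ∑ m ∈ Finset.range (n+3), (if n = i ∧ m = j then c else 0) = if n = i then c else 0 := by
    intro i j c hj
    rw [Finset.sum_congr rfl (fun m _ => show (if n = i ∧ m = j then c else 0)
        = if m = j then (if n = i then c else 0) else 0 by split_ifs <;> tauto)]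
    rw [Finset.sum_ite_eq' (Finset.range (n+3)) j]
    simp [hj]
  have e2 : ∑ m ∈ Finset.range (n+3),
      (if 3 + k ≤ n ∧ 2 ≤ m then (kArndtParts k (n-(3+k)) (m-2) : ℤ) else 0)
      = if 3 + k ≤ n then (kArndt k (n-(3+k)) : ℤ) else 0 := by
    have h' : ∀ m ∈ Finset.range (n+3), (if 3 + k ≤ n ∧ 2 ≤ m then (kArndtParts k (n-(3+k)) (m-2) : ℤ) else 0)
        = if 3 + k ≤ n then (if 2 ≤ m then (kArndtParts k (n-(3+k)) (m-2) : ℤ) else 0) else 0 := by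
      intro m _
      split_ifs <;> tauto
    rw [Finset.sum_congr rfl h', sum_ite_const]
    congr 1
    rw [show n + 3 = 2 + (n+1) by omega, Finset.sum_range_add]
    have h0 : ∀ m ∈ Finset.range 2, (if 2 ≤ m then (kArndtParts k (n-(3+k)) (m-2) : ℤ) else 0) = 0 := by
      intro m hm
      simp only [Finset.mem_range] at hm
      rw [if_neg (by omega)]
    rw [Finset.sum_congr rfl h0, Finset.sum_const, smul_zero, zero_add]
    rw [Finset.sum_congr rfl (fun m _ => by rw [if_pos (by omega : 2 ≤ 2 + m),
      show 2 + m - 2 = m from by omega])]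
    exact hZ _ _ (by omega)
  have L : ∑ m ∈ Finset.range (n+3),
      ((kArndtParts k n m : ℤ)
        - (if 1 ≤ n then (kArndtParts k (n-1) m : ℤ) else 0)
        - (if 2 ≤ n then (kArndtParts k (n-2) m : ℤ) else 0)
        + (if 3 ≤ n then (kArndtParts k (n-3) m : ℤ) else 0)
        - (if 3 + k ≤ n ∧ 2 ≤ m then (kArndtParts k (n-(3+k)) (m-2) : ℤ) else 0))
      = (kArndt k n : ℤ) - (if 1 ≤ n then (kArndt k (n-1) : ℤ) else 0)
        - (if 2 ≤ n then (kArndt k (n-2) : ℤ) else 0)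
        + (if 3 ≤ n then (kArndt k (n-3) : ℤ) else 0)
        - (if k + 3 ≤ n then (kArndt k (n-(k+3)) : ℤ) else 0) := by
    rw [Finset.sum_sub_distrib, Finset.sum_add_distrib, Finset.sum_sub_distrib,
      Finset.sum_sub_distrib]
    rw [sum_ite_const, sum_ite_const, sum_ite_const, e2, hZ n (n+3) (by omega),
      hZ (n-1) (n+3) (by omega), hZ (n-2) (n+3) (by omega), hZ (n-3) (n+3) (by omega),
      show 3 + k = k + 3 from by omega]
  have R : (∑ m ∈ Finset.range (n+3),
      ((if n = 0 ∧ m = 0 then 1 else 0) - (if n = 1 ∧ m = 0 then 1 else 0)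
        + (if n = 1 ∧ m = 1 then 1 else 0) - (if n = 2 ∧ m = 0 then 1 else 0)
        + (if n = 3 ∧ m = 0 then 1 else 0) - (if n = 3 ∧ m = 1 then (1:ℤ) else 0)))
      = (if n = 0 then (1:ℤ) else 0) - (if n = 2 then 1 else 0) := by
    rw [Finset.sum_sub_distrib, Finset.sum_add_distrib, Finset.sum_sub_distrib,
      Finset.sum_add_distrib, Finset.sum_sub_distrib]
    rw [e1 0 0 1 (by omega), e1 1 0 1 (by omega), e1 1 1 1 (by omega),
      e1 2 0 1 (by omega), e1 3 0 1 (by omega), e1 3 1 1 (by omega)]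
    split_ifs <;> omega
  rw [L, R] at key
  exact key

/-- for `k ≥ 0`,
`(1 - x - x² + x³ - x^{3+k} y²) · A_k(x,y) = (1 - x²)(1 - x + xy)`, and setting `y = 1`,
`(1 - x - x² + x³ - x^{k+3}) · Σ_{n≥0} a_k(n) xⁿ = 1 - x²`. -/
theorem kArndtGF_eq (k : ℕ) :
    (1 - MvPowerSeries.X 0 - MvPowerSeries.X 0 ^ 2 + MvPowerSeries.X 0 ^ 3
          - MvPowerSeries.X 0 ^ (3 + k) * MvPowerSeries.X 1 ^ 2) * kArndtGF k
        = (1 - MvPowerSeries.X 0 ^ 2) *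
          (1 - MvPowerSeries.X 0 + MvPowerSeries.X 0 * MvPowerSeries.X 1) ∧
      (1 - PowerSeries.X - PowerSeries.X ^ 2 + PowerSeries.X ^ 3 - PowerSeries.X ^ (k + 3)) *
          PowerSeries.mk (fun n => (kArndt k n : ℤ)) =
        1 - PowerSeries.X ^ 2 := by
  exact ⟨part1 k, part2 k⟩
end
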